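/- RUP soundness: if applying unit propagation to fixpoint on the constraint set D ∪ {¬C} yields a contradiction (some constraint is falsified under the propagated partial assignment), then D entails C over 0-1 assignments, where ¬C denotes the constraints forcing all literals of the clause C to be false. -/

import Mathlib

/-- A pseudo-Boolean constraint `Σ_{ℓ ∈ lits} w(ℓ)·ℓ ≥ deg` over literals (variable, polarity). -/
structure PBC (ι : Type*) where
  lits : Finset (ι × Bool)
  w : ι × Bool → ℕ
  deg : ℕ

/-- Value of a literal under a total Boolean assignment. -/
def litEval {ι : Type*} (β : ι → Bool) (l : ι × Bool) : Bool :=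
  if l.2 then β l.1 else !(β l.1)

/-- Negation of a literal. -/
def negLit {ι : Type*} (l : ι × Bool) : ι × Bool := (l.1, !l.2)

/-- Satisfaction of a PB constraint by a total assignment. -/
def satPBC {ι : Type*} (β : ι → Bool) (C : PBC ι) : Prop :=
  C.deg ≤ ∑ l ∈ C.lits.filter (fun l => litEval β l = true), C.w l

/-- A total assignment extends a partial assignment (a set of literals deemed true). -/
def extendsAssign {ι : Type*} (β : ι → Bool) (α : Set (ι × Bool)) : Prop :=
  ∀ l ∈ α, litEval β l = true

/-- Constraint-driven unit propagation: some constraint of `D` propagates literal `ℓ`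
under partial assignment `α`, i.e. setting `ℓ` false makes the restricted constraint
unsatisfiable. -/
def propagatesTo {ι : Type*} (D : Finset (PBC ι)) (α : Set (ι × Bool)) (ℓ : ι × Bool) : Prop :=
  ∃ C ∈ D, ∀ β : ι → Bool, extendsAssign β α → litEval β ℓ = false → ¬ satPBC β C

/-- `upSeq D α₀ L` holds when `L` is a valid sequence of unit propagations from `α₀`
(the head of the list is propagated last). -/
def upSeq {ι : Type*} (D : Finset (PBC ι)) (α₀ : Set (ι × Bool)) : List (ι × Bool) → Prop
  | [] => True
  | ℓ :: L => upSeq D α₀ L ∧ propagatesTo D (α₀ ∪ {x | x ∈ L}) ℓ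

lemma upSeq_extends {ι : Type*} (D : Finset (PBC ι)) (α₀ : Set (ι × Bool))
    (β : ι → Bool) (hD : ∀ P ∈ D, satPBC β P) (h0 : extendsAssign β α₀) :
    ∀ L : List (ι × Bool), upSeq D α₀ L → extendsAssign β (α₀ ∪ {x | x ∈ L}) := by
  intro L
  induction L with
  | nil =>
    intro _ l hl
    rcases hl with hl | hl
    · exact h0 l hl
    · simp at hl
  | cons ℓ L ih =>
    rintro ⟨hup, Cp, hCp, hprop⟩ l hl
    have hext : extendsAssign β (α₀ ∪ {x | x ∈ L}) := ih hup
    have hℓ : litEval β ℓ = true := by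
      by_contra h
      exact hprop β hext (by simpa using h) (hD Cp hCp)
    rcases hl with hl | hl
    · exact hext l (Or.inl hl)
    · rcases List.mem_cons.mp hl with rfl | hl
      · exact hℓ
      · exact hext l (Or.inr hl)

/-- RUP soundness: if unit propagation on `D ∪ {¬C}` (all literals of the clause `C`
set to false) reaches, along some propagation sequence `L`, a state in which some
constraint of `D` is falsified, then `D` entails the clause `C` over 0-1 assignments. -/
theorem stmt19 {ι : Type*} (D : Finset (PBC ι)) (C : Finset (ι × Bool))
    (hrup : ∃ L : List (ι × Bool),
      upSeq D {l | ∃ c ∈ C, l = negLit c} L ∧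
      ∃ C' ∈ D, ∀ β : ι → Bool,
        extendsAssign β ({l | ∃ c ∈ C, l = negLit c} ∪ {x | x ∈ L}) → ¬ satPBC β C') :
    ∀ β : ι → Bool, (∀ P ∈ D, satPBC β P) → ∃ l ∈ C, litEval β l = true := by
  intro β hD
  by_contra h
  push_neg at h
  obtain ⟨L, hup, C', hC', hfals⟩ := hrup
  have h0 : extendsAssign β {l | ∃ c ∈ C, l = negLit c} := by
    rintro l ⟨c, hc, rfl⟩
    have := h c hc
    simp [litEval, negLit] at this ⊢
    rcases l2 : c.2 <;> simp [l2] at this ⊢ <;> simp [this]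
  exact hfals β (upSeq_extends D _ β hD h0 L hup) (hD C' hC')
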